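/- Let T ≫ 1, δ > 0, and x₁,…,x_N ∈ [0,T]. Suppose α ∈ ℝ satisfies αT ≥ 2/δ and |Σ_{j=1}^N e(αx_j)| ≥ δN. Then for any ε > 0 with ε < δ/C (C an absolute constant) there exists β ∈ [0,1) such that |{1 ≤ j ≤ N : ‖αx_j + β‖ ≤ ε}| ≥ 2ε(1 + δ/16)N. -/

import Mathlib

open Real MeasureTheory

/-- distance to the nearest integer -/
noncomputable def nint (x : ℝ) : ℝ := |x - round x|

/-- e(x) = exp(2πix) -/
noncomputable def e (x : ℝ) : ℂ := Complex.exp (2 * Real.pi * Complex.I * x)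

lemma nint_add_int (z : ℝ) (n : ℤ) : nint (z + n) = nint z := by
  rw [nint, nint, round_add_intCast]; push_cast; ring_nf

lemma nint_of_small {z : ℝ} (h : |z| < 1/2) : nint z = |z| := by
  rw [nint, round_eq_zero_iff.2 ⟨by cases abs_le.1 h.le; linarith, (abs_lt.1 h).2⟩]
  norm_num

lemma e_norm (t : ℝ) : ‖e t‖ = 1 := by
  rw [e, show 2*(π:ℂ)*Complex.I*(t:ℂ) = ((2*π*t : ℝ):ℂ)*Complex.I by push_cast; ring]
  exact Complex.norm_exp_ofReal_mul_I _

lemma e_re (t : ℝ) : (e t).re = Real.cos (2*π*t) := by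
  rw [e, show 2*(π:ℂ)*Complex.I*(t:ℂ) = ((2*π*t : ℝ):ℂ)*Complex.I by push_cast; ring]
  exact Complex.exp_ofReal_mul_I_re _

lemma e_mul (a b : ℝ) : e a * e b = e (a+b) := by
  rw [e, e, e, ← Complex.exp_add]; push_cast; ring_nf

lemma e_rot (S : ℂ) : e (-(Complex.arg S)/(2*π)) * S = ((‖S‖ : ℝ) : ℂ) := by
  rw [e]
  rw [show 2*(π:ℂ)*Complex.I*((-(Complex.arg S)/(2*π) : ℝ):ℂ) = -(Complex.arg S)*Complex.I by
    have hπ : (π:ℂ) ≠ 0 := by exact_mod_cast Real.pi_ne_zero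
    push_cast; field_simp]
  nth_rewrite 2 [← Complex.norm_mul_exp_arg_mul_I S]
  rw [mul_comm (((‖S‖ : ℝ) : ℂ)) _, ← mul_assoc, ← Complex.exp_add]
  ring_nf
  simp

/-- rotation: there is a phase shift making the exponential sum real and equal to its norm -/
lemma exists_shift (N : ℕ) (w : Fin N → ℝ) :
    ∃ φ : ℝ, ∑ j, Real.cos (2*π*(w j + φ)) = ‖∑ j, e (w j)‖ := by
  refine ⟨-(Complex.arg (∑ j, e (w j)))/(2*π), ?_⟩
  set S := ∑ j, e (w j) with hSdef
  have h1 : e (-(Complex.arg S)/(2*π)) * S = ∑ j, e (w j + -(Complex.arg S)/(2*π)) := by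
    rw [hSdef, Finset.mul_sum]
    refine Finset.sum_congr rfl fun j _ => ?_
    rw [e_mul, add_comm]
  have h2 := congrArg Complex.re (h1.symm.trans (e_rot S))
  rw [Complex.re_sum, Complex.ofReal_re] at h2
  simp only [e_re] at h2
  rw [h2]

lemma cos_nint (t : ℝ) : Real.cos (2*π*t) = Real.cos (2*π*(nint t)) := by
  rw [nint]
  rw [show 2*π*t = 2*π*(t - round t) + (round t : ℤ)*(2*π) by push_cast; ring]
  rw [Real.cos_add_int_mul_two_pi]
  rw [show 2*π*|t - (round t:ℤ)| = |2*π*(t - (round t:ℤ))| by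
    rw [abs_mul, abs_of_pos (by positivity : (0:ℝ) < 2*π)]]
  rw [Real.cos_abs]

lemma g_integral (a b : ℝ) :
    ∫ s in a..b, 2*π*Real.sin (2*π*s) = Real.cos (2*π*a) - Real.cos (2*π*b) := by
  have h : ∀ t ∈ Set.uIcc a b, HasDerivAt (fun s => -Real.cos (2*π*s)) (2*π*Real.sin (2*π*t)) t := by
    intro t _
    have h := ((Real.hasDerivAt_cos (2*π*t)).comp t (((hasDerivAt_id t).const_mul (2*π)))).neg
    exact h.congr_deriv (by ring)
  have := intervalIntegral.integral_eq_sub_of_hasDerivAt h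
    ((by fun_prop : Continuous fun s => 2*π*Real.sin (2*π*s)).intervalIntegrable a b)
  rw [this]; ring

lemma main_integral (Nr M ε : ℝ) :
    ∫ s in (0:ℝ)..(1/2), (Nr - 2*(s+ε)*M) * (2*π*Real.sin (2*π*s))
      = 2*Nr - (1+4*ε)*M := by
  have h : ∀ t ∈ Set.uIcc (0:ℝ) (1/2), HasDerivAt
      (fun s => -(Nr - 2*(s+ε)*M) * Real.cos (2*π*s) - 2*M*(Real.sin (2*π*s)/(2*π)))
      ((Nr - 2*(t+ε)*M) * (2*π*Real.sin (2*π*t))) t := by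
    intro t _
    have hc : HasDerivAt (fun s => Real.cos (2*π*s)) (-(2*π*Real.sin (2*π*t))) t := by
      have h := ((Real.hasDerivAt_cos (2*π*t)).comp t (((hasDerivAt_id t).const_mul (2*π))))
      exact h.congr_deriv (by ring)
    have hs : HasDerivAt (fun s => Real.sin (2*π*s)) (2*π*Real.cos (2*π*t)) t := by
      have h := ((Real.hasDerivAt_sin (2*π*t)).comp t (((hasDerivAt_id t).const_mul (2*π))))
      exact h.congr_deriv (by ring)
    have hlin : HasDerivAt (fun s : ℝ => -(Nr - 2*(s+ε)*M)) (2*M) t := by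
      have h := ((((hasDerivAt_id t).add_const ε).const_mul 2).mul_const M).const_sub Nr |>.neg
      exact h.congr_deriv (by ring)
    have := (hlin.mul hc).sub (((hs.div_const (2*π))).const_mul (2*M))
    exact this.congr_deriv (by field_simp; ring)
  have hint := intervalIntegral.integral_eq_sub_of_hasDerivAt h
    ((by fun_prop : Continuous fun s => (Nr - 2*(s+ε)*M) * (2*π*Real.sin (2*π*s))).intervalIntegrable 0 (1/2))
  rw [hint]
  norm_num [show 2*π*(1/2:ℝ) = π by ring, Real.cos_pi, Real.sin_pi]
  ring

/-- the distribution function bound obtained by covering with small arcs -/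
lemma distbound (ε M φ : ℝ) (N : ℕ) (w : Fin N → ℝ) (hε : 0 < ε) (hε2 : ε < 1/4)
    (hcount : ∀ γ : ℝ,
      ((Finset.univ.filter (fun j => nint (w j + γ) ≤ ε)).card : ℝ) ≤ 2*ε*M)
    (s : ℝ) (hs : 0 ≤ s) :
    ((Finset.univ.filter (fun j => nint (w j + φ) ≤ s)).card : ℝ) ≤ 2*(s+ε)*M := by
  have hM0 : 0 ≤ M := by
    have h0 := hcount 0
    have h1 : (0:ℝ) ≤ ((Finset.univ.filter (fun j => nint (w j + 0) ≤ ε)).card : ℝ) :=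
      Nat.cast_nonneg _
    nlinarith
  set K : ℕ := max ⌈s/ε⌉₊ 1 with hK
  have hK1 : 1 ≤ K := le_max_right _ _
  have hsK : s ≤ (K:ℝ)*ε := by
    calc s = (s/ε)*ε := by field_simp
    _ ≤ (⌈s/ε⌉₊:ℝ)*ε := by gcongr; exact Nat.le_ceil _
    _ ≤ (K:ℝ)*ε := by gcongr; exact_mod_cast le_max_left _ _
  have hKs : (K:ℝ) ≤ s/ε + 1 := by
    rcases le_or_gt ⌈s/ε⌉₊ 1 with h | h
    · have hKe : K = 1 := max_eq_right h
      rw [hKe]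
      have : 0 ≤ s/ε := div_nonneg hs hε.le
      push_cast; linarith
    · have hKe : K = ⌈s/ε⌉₊ := max_eq_left (by omega)
      rw [hKe]
      have := Nat.ceil_lt_add_one (div_nonneg hs hε.le)
      linarith
  have hsub : Finset.univ.filter (fun j => nint (w j + φ) ≤ s) ⊆
      (Finset.range K).biUnion (fun i => Finset.univ.filter
        (fun j => nint (w j + (φ - (2*(i:ℝ)+1-(K:ℝ))*ε)) ≤ ε)) := by
    intro j hj
    rw [Finset.mem_filter] at hj
    obtain ⟨-, hjs⟩ := hj
    have htabs : |w j + φ - (round (w j + φ) : ℤ)| ≤ s := hjs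
    set y := w j + φ with hy
    set t := y - (round y : ℤ) with ht
    set r := (t + (K:ℝ)*ε)/(2*ε) with hr
    have hr0 : 0 ≤ r := by
      apply div_nonneg _ (by positivity)
      have := abs_le.1 htabs; linarith
    have hrK : r ≤ (K:ℝ) := by
      rw [div_le_iff₀ (by positivity)]
      have := abs_le.1 htabs; linarith
    set i : ℕ := min ⌊r⌋₊ (K-1) with hi
    have hiK : i < K := by
      have : i ≤ K - 1 := min_le_right _ _
      omega
    have hlow : (i:ℝ) ≤ r ∧ r ≤ (i:ℝ)+1 := by
      rcases le_or_gt ⌊r⌋₊ (K-1) with h | h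
      · have hie : i = ⌊r⌋₊ := min_eq_left h
        refine ⟨by rw [hie]; exact Nat.floor_le hr0, ?_⟩
        rw [hie]
        have := Nat.lt_floor_add_one r
        push_cast at this ⊢
        linarith
      · have hie : i = K - 1 := min_eq_right (by omega)
        have hKr : (K:ℝ) ≤ r := by
          have h4 : (K:ℕ) ≤ ⌊r⌋₊ := by omega
          calc (K:ℝ) ≤ (⌊r⌋₊:ℝ) := by exact_mod_cast h4
          _ ≤ r := Nat.floor_le hr0
        have hre : r = (K:ℝ) := le_antisymm hrK hKr
        have hcast : ((K-1:ℕ):ℝ) = (K:ℝ)-1 := by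
          push_cast [Nat.cast_sub hK1]; ring
        rw [hie, hre, hcast]
        constructor <;> linarith
    refine Finset.mem_biUnion.2 ⟨i, Finset.mem_range.2 hiK,
      Finset.mem_filter.2 ⟨Finset.mem_univ _, ?_⟩⟩
    have e1 : t = 2*ε*r - (K:ℝ)*ε := by
      rw [hr]; field_simp; ring
    have key : |t - (2*(i:ℝ)+1-(K:ℝ))*ε| ≤ ε := by
      rw [abs_le]
      obtain ⟨h1, h2⟩ := hlow
      constructor <;> nlinarith
    have harg : w j + (φ - (2*(i:ℝ)+1-(K:ℝ))*ε)
        = (t - (2*(i:ℝ)+1-(K:ℝ))*ε) + ((round y : ℤ) : ℝ) := by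
      rw [ht, hy]; push_cast; ring
    rw [harg, nint_add_int, nint_of_small (lt_of_le_of_lt key (by linarith))]
    exact key
  calc ((Finset.univ.filter (fun j => nint (w j + φ) ≤ s)).card : ℝ)
      ≤ (((Finset.range K).biUnion (fun i => Finset.univ.filter
        (fun j => nint (w j + (φ - (2*(i:ℝ)+1-(K:ℝ))*ε)) ≤ ε))).card : ℝ) := by
        exact_mod_cast Finset.card_le_card hsub
  _ ≤ ∑ i ∈ Finset.range K, ((Finset.univ.filter
        (fun j => nint (w j + (φ - (2*(i:ℝ)+1-(K:ℝ))*ε)) ≤ ε)).card : ℝ) := by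
        exact_mod_cast Finset.card_biUnion_le
  _ ≤ ∑ _i ∈ Finset.range K, 2*ε*M := by
        exact Finset.sum_le_sum fun i _ => hcount _
  _ = (K:ℝ)*(2*ε*M) := by
        rw [Finset.sum_const, Finset.card_range, nsmul_eq_mul]
  _ ≤ (s/ε+1)*(2*ε*M) := by
        apply mul_le_mul_of_nonneg_right hKs (by positivity)
  _ = 2*(s+ε)*M := by field_simp
noncomputable def g (s : ℝ) : ℝ := 2*π*Real.sin (2*π*s)

lemma hgc : Continuous g := by unfold g; fun_prop

lemma g_integral' (a b : ℝ) : ∫ s in a..b, g s = Real.cos (2*π*a) - Real.cos (2*π*b) :=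
  g_integral a b

lemma g_nonneg {s : ℝ} (hs : s ∈ Set.Icc (0:ℝ) (1/2)) : 0 ≤ g s := by
  unfold g
  refine mul_nonneg (by positivity) (Real.sin_nonneg_of_nonneg_of_le_pi ?_ ?_)
  · nlinarith [Real.pi_pos, hs.1]
  · nlinarith [Real.pi_pos, hs.2]

set_option maxHeartbeats 1000000 in
/-- layer-cake bound: distribution control forces the cosine sum down -/
lemma keybound (ε M : ℝ) (N : ℕ) (u : Fin N → ℝ) (hε : 0 < ε)
    (hu_mem : ∀ j, u j ∈ Set.Icc (0:ℝ) (1/2))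
    (hA : ∀ s : ℝ, 0 ≤ s →
      ((Finset.univ.filter (fun j => u j ≤ s)).card : ℝ) ≤ 2*(s+ε)*M) :
    ∑ j, Real.cos (2*π*(u j)) ≤ -(N:ℝ) + (1+4*ε)*M := by
  have hind_int : ∀ j, IntervalIntegrable (Set.indicator {z | z ≤ u j} g) volume 0 (1/2) := by
    intro j
    rw [intervalIntegrable_iff_integrableOn_Ioc_of_le (by norm_num : (0:ℝ) ≤ 1/2)]
    have h5 : IntegrableOn g (Set.Ioc (0:ℝ) (1/2)) volume := hgc.integrableOn_Ioc
    exact h5.indicator measurableSet_Iic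
  have h0 : ∫ s in (0:ℝ)..(1/2), g s = 2 := by
    rw [g_integral']
    norm_num [show 2*π*(1/2:ℝ) = π by ring, Real.cos_pi]
  have hsplit : ∀ j, ∫ s in (u j)..(1/2:ℝ), g s
      = 2 - ∫ s in (0:ℝ)..(1/2), Set.indicator {z | z ≤ u j} g s := by
    intro j
    rw [intervalIntegral.integral_indicator (hu_mem j)]
    have hadj := intervalIntegral.integral_add_adjacent_intervals
      (hgc.intervalIntegrable (μ := volume) 0 (u j)) (hgc.intervalIntegrable (μ := volume) (u j) (1/2))
    linarith
  have hcos1 : ∀ j, 1 + Real.cos (2*π*(u j)) = ∫ s in (u j)..(1/2:ℝ), g s := by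
    intro j
    rw [g_integral']
    norm_num [show 2*π*(1/2:ℝ) = π by ring, Real.cos_pi]
    ring
  have hswap : ∫ s in (0:ℝ)..(1/2), (∑ j, Set.indicator {z | z ≤ u j} g s)
      = ∑ j, ∫ s in (0:ℝ)..(1/2), Set.indicator {z | z ≤ u j} g s :=
    intervalIntegral.integral_finset_sum (fun j _ => hind_int j)
  have hptwise : ∀ s ∈ Set.Icc (0:ℝ) (1/2), ((N:ℝ) - 2*(s+ε)*M) * g s
      ≤ ∑ j, Set.indicator {z | z ≤ u j} g s := by
    intro s hs
    have hg0 : 0 ≤ g s := g_nonneg hs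
    have hsum_eq : ∑ j, Set.indicator {z | z ≤ u j} g s
        = ((Finset.univ.filter (fun j => s ≤ u j)).card : ℝ) * g s := by
      simp only [Set.indicator_apply, Set.mem_setOf_eq]
      rw [Finset.sum_ite, Finset.sum_const, Finset.sum_const_zero, add_zero, nsmul_eq_mul]
    rw [hsum_eq]
    apply mul_le_mul_of_nonneg_right _ hg0
    have hcards := Finset.card_filter_add_card_filter_not
      (s := (Finset.univ : Finset (Fin N))) (p := fun j => u j ≤ s)
    have h2 : (Finset.univ.filter (fun j => ¬ u j ≤ s)).card
        ≤ (Finset.univ.filter (fun j => s ≤ u j)).card := by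
      apply Finset.card_le_card
      exact Finset.monotone_filter_right _ (fun j _ h => (lt_of_not_ge h).le)
    have h1 := hA s hs.1
    have hcard' : ((Finset.univ.filter (fun j => u j ≤ s)).card : ℝ)
        + ((Finset.univ.filter (fun j => ¬ u j ≤ s)).card : ℝ) = (N:ℝ) := by
      rw [← Nat.cast_add]
      norm_cast
      simpa using hcards
    have h2' : ((Finset.univ.filter (fun j => ¬ u j ≤ s)).card : ℝ)
        ≤ ((Finset.univ.filter (fun j => s ≤ u j)).card : ℝ) := by exact_mod_cast h2
    linarith
  have hsum_int : IntervalIntegrable (fun s => ∑ j, Set.indicator {z | z ≤ u j} g s)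
      volume 0 (1/2) := by
    have heq : (fun s => ∑ j, Set.indicator {z | z ≤ u j} g s)
        = ∑ j, Set.indicator {z | z ≤ u j} g := by
      funext s; simp [Finset.sum_apply]
    rw [heq]
    exact IntervalIntegrable.sum _ (fun j _ => hind_int j)
  have hlhs_int : IntervalIntegrable (fun s => ((N:ℝ) - 2*(s+ε)*M) * g s) volume 0 (1/2) := by
    apply Continuous.intervalIntegrable
    exact (by fun_prop : Continuous fun s : ℝ => ((N:ℝ) - 2*(s+ε)*M)).mul hgc
  have hmono := intervalIntegral.integral_mono_on (by norm_num : (0:ℝ) ≤ 1/2)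
    hlhs_int hsum_int hptwise
  have hIcompute : ∫ s in (0:ℝ)..(1/2), ((N:ℝ) - 2*(s+ε)*M) * g s = 2*(N:ℝ) - (1+4*ε)*M := by
    have := main_integral (N:ℝ) M ε
    simpa [g] using this
  have e3 : ∑ j, (1 + Real.cos (2*π*(u j)))
      = 2*(N:ℝ) - ∫ s in (0:ℝ)..(1/2), (∑ j, Set.indicator {z | z ≤ u j} g s) := by
    rw [hswap]
    rw [Finset.sum_congr rfl (fun j _ => (hcos1 j).trans (hsplit j))]
    rw [Finset.sum_sub_distrib, Finset.sum_const, Finset.card_univ, Fintype.card_fin,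
      nsmul_eq_mul]
    ring
  have e2 : ∑ j, Real.cos (2*π*(u j)) = -(N:ℝ) + ∑ j, (1 + Real.cos (2*π*(u j))) := by
    rw [Finset.sum_add_distrib, Finset.sum_const, Finset.card_univ, Fintype.card_fin,
      nsmul_eq_mul, mul_one]
    ring
  rw [e2, e3]
  rw [hIcompute] at hmono
  linarith
theorem stmt9 : ∃ C T₀ : ℝ, 0 < C ∧ 1 ≤ T₀ ∧ ∀ (T δ ε α : ℝ) (N : ℕ) (x : Fin N → ℝ),
    T₀ ≤ T → 0 < δ → 0 < ε → ε < δ / C →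
    (∀ j, x j ∈ Set.Icc 0 T) → 2 / δ ≤ α * T →
    δ * N ≤ ‖∑ j, e (α * x j)‖ →
    ∃ β : ℝ, β ∈ Set.Ico (0 : ℝ) 1 ∧
      2 * ε * (1 + δ / 16) * N ≤ ({j : Fin N | nint (α * x j + β) ≤ ε}.ncard : ℝ) := by
  refine ⟨5, 1, by norm_num, le_refl 1, ?_⟩
  intro T δ ε α N x hT hδ hε hεδ hx hαT hsum
  rcases Nat.eq_zero_or_pos N with hN | hN
  · refine ⟨0, ⟨le_refl 0, one_pos⟩, ?_⟩
    subst hN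
    simp
  by_contra hcon
  push_neg at hcon
  have hN1 : (1:ℝ) ≤ (N:ℝ) := by exact_mod_cast hN
  have hSN : ‖∑ j, e (α * x j)‖ ≤ (N:ℝ) := by
    calc ‖∑ j, e (α * x j)‖ ≤ ∑ j : Fin N, ‖e (α * x j)‖ := norm_sum_le _ _
    _ = (N:ℝ) := by simp only [e_norm]; simp
  have hδ1 : δ ≤ 1 := by nlinarith
  have hε5 : ε < δ/5 := hεδ
  have hε14 : ε < 1/4 := by linarith
  obtain ⟨φ, hφ⟩ := exists_shift N (fun j => α * x j)
  have hcount : ∀ γ : ℝ,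
      ((Finset.univ.filter (fun j => nint (α * x j + γ) ≤ ε)).card : ℝ)
        ≤ 2*ε*((1+δ/16)*(N:ℝ)) := by
    intro γ
    have h1 := hcon (Int.fract γ) ⟨Int.fract_nonneg γ, Int.fract_lt_one γ⟩
    have h2 : {j : Fin N | nint (α * x j + Int.fract γ) ≤ ε}.ncard
        = (Finset.univ.filter (fun j => nint (α * x j + γ) ≤ ε)).card := by
      rw [Set.ncard_eq_toFinset_card', Set.toFinset_setOf]
      congr 1
      apply Finset.filter_congr
      intro j _
      have h3 : α * x j + γ = (α * x j + Int.fract γ) + (⌊γ⌋ : ℤ) := by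
        rw [Int.fract]; push_cast; ring
      rw [h3, nint_add_int]
    rw [h2] at h1
    calc ((Finset.univ.filter (fun j => nint (α * x j + γ) ≤ ε)).card : ℝ)
        ≤ 2 * ε * (1 + δ / 16) * ↑N := h1.le
    _ = 2*ε*((1+δ/16)*(N:ℝ)) := by ring
  have hA := distbound ε ((1+δ/16)*(N:ℝ)) φ N (fun j => α * x j) hε hε14 hcount
  have hu_mem : ∀ j : Fin N, nint (α * x j + φ) ∈ Set.Icc (0:ℝ) (1/2) :=
    fun j => ⟨abs_nonneg _, abs_sub_round _⟩
  have hkey := keybound ε ((1+δ/16)*(N:ℝ)) N (fun j => nint (α * x j + φ)) hε hu_mem hA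
  have hchain : δ*(N:ℝ) ≤ ∑ j, Real.cos (2*π*(nint (α * x j + φ))) := by
    have h4 : ∑ j, Real.cos (2*π*((fun j => α * x j) j + φ))
        = ∑ j, Real.cos (2*π*(nint (α * x j + φ))) :=
      Finset.sum_congr rfl fun j _ => cos_nint _
    rw [← h4, hφ]
    exact hsum
  have hfin : δ*(N:ℝ) ≤ -(N:ℝ) + (1+4*ε)*((1+δ/16)*(N:ℝ)) := le_trans hchain hkey
  nlinarith
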